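/- Let n ≥ 1 and let P be a multivariate polynomial over ℝ in variables indexed by Fin n such that the degree of P in each variable is at most 1 (a multilinear polynomial), and let f : (Fin n → ℝ) → ℝ be its evaluation map. Let R ⊆ (Fin n → ℝ) be a nonempty, closed and bounded set. Then f attains its maximum over R at some point of the topological frontier of R, i.e., there exists x ∈ frontier R ∩ R with f y ≤ f x for all y ∈ R; likewise, f attains its minimum over R at some point of the frontier of R. -/

import Mathlib

open MvPolynomial

lemma key_max (m : ℕ) (P : MvPolynomial (Fin (m+1)) ℝ) (hP : P.degreeOf 0 ≤ 1)
    (R : Set (Fin (m+1) → ℝ)) (hne : R.Nonempty) (hclosed : IsClosed R)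
    (hbdd : Bornology.IsBounded R) :
    ∃ x ∈ frontier R ∩ R, ∀ y ∈ R, MvPolynomial.eval y P ≤ MvPolynomial.eval x P := by
  have hcomp : IsCompact R := Metric.isCompact_of_isClosed_isBounded hclosed hbdd
  have hcont : Continuous fun y : Fin (m+1) → ℝ => MvPolynomial.eval y P :=
    MvPolynomial.continuous_eval P
  obtain ⟨x, hxR, hmax⟩ := hcomp.exists_isMaxOn hne hcont.continuousOn
  have hmax' : ∀ y ∈ R, MvPolynomial.eval y P ≤ MvPolynomial.eval x P := fun y hy => hmax hy
  by_cases hxint : x ∈ interior R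
  swap
  · refine ⟨x, ⟨?_, hxR⟩, hmax'⟩
    rw [frontier, hclosed.closure_eq]
    exact ⟨hxR, hxint⟩
  -- x is an interior maximum; use affineness in coordinate 0
  set q := Polynomial.map (MvPolynomial.eval (Fin.tail x)) (MvPolynomial.finSuccEquiv ℝ m P)
    with hqdef
  have hup : ∀ t : ℝ, Function.update x 0 t = Fin.cons t (Fin.tail x) := by
    intro t
    ext j
    refine Fin.cases ?_ (fun k => ?_) j
    · simp
    · simp [Fin.tail, Function.update_of_ne (Fin.succ_ne_zero k)]
  have hq : ∀ t : ℝ, MvPolynomial.eval (Function.update x 0 t) P = q.eval t := by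
    intro t
    rw [hup t, MvPolynomial.eval_eq_eval_mv_eval']
  have hdeg : q.natDegree ≤ 1 := by
    refine le_trans Polynomial.natDegree_map_le ?_
    rw [MvPolynomial.natDegree_finSuccEquiv]
    exact hP
  set b := q.coeff 1 with hb
  set a := q.coeff 0 with ha
  have hqeval : ∀ t : ℝ, q.eval t = b * t + a := by
    intro t
    conv_lhs => rw [Polynomial.eq_X_add_C_of_natDegree_le_one hdeg]
    simp
    rfl
  have hx0 : MvPolynomial.eval x P = b * (x 0) + a := by
    have h := hq (x 0)
    rw [Function.update_eq_self] at h
    rw [h, hqeval]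
  -- nearby points along coordinate 0 stay in R
  obtain ⟨ε, hε, hball⟩ := Metric.isOpen_iff.mp isOpen_interior x hxint
  have hnear : ∀ s : ℝ, |s| < ε → Function.update x 0 (x 0 + s) ∈ R := by
    intro s hs
    refine interior_subset (hball ?_)
    rw [Metric.mem_ball, dist_pi_lt_iff hε]
    intro j
    rcases eq_or_ne j 0 with rfl | hj
    · simpa [Real.dist_eq] using hs
    · simpa [Function.update_of_ne hj] using hε
  have hval : ∀ s : ℝ, |s| < ε → b * s ≤ 0 := by
    intro s hs
    have h := hmax' _ (hnear s hs)
    rw [hq, hqeval, hx0] at h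
    linarith
  have hb0 : b = 0 := by
    have h1 := hval (ε/2) (by rw [abs_of_pos (by linarith)]; linarith)
    have h2 := hval (-(ε/2)) (by rw [abs_neg, abs_of_pos (by linarith)]; linarith)
    nlinarith
  -- f is constant along coordinate 0 through x, with value eval x P
  have hconst : ∀ t : ℝ, MvPolynomial.eval (Function.update x 0 t) P = MvPolynomial.eval x P := by
    intro t
    rw [hq, hqeval, hx0, hb0]
    ring
  -- the set of parameters staying in R
  set T : Set ℝ := {t | Function.update x 0 t ∈ R} with hT
  have hupdcont : Continuous fun t : ℝ => Function.update x 0 t := by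
    refine continuous_pi fun j => ?_
    rcases eq_or_ne j 0 with rfl | hj
    · simpa using continuous_id'
    · simpa [Function.update_of_ne hj] using continuous_const
  have hTclosed : IsClosed T := hclosed.preimage hupdcont
  have hTne : T.Nonempty := ⟨x 0, by simp only [hT, Set.mem_setOf_eq, Function.update_eq_self]; exact hxR⟩
  obtain ⟨C, hC⟩ := hbdd.subset_closedBall 0
  have hTbdd : Bornology.IsBounded T := by
    refine (Metric.isBounded_Icc (-C) C).subset fun t ht => ?_
    have hmem := hC ht
    rw [Metric.mem_closedBall] at hmem
    have : dist (Function.update x 0 t 0) (0 : ℝ) ≤ C :=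
      le_trans (dist_le_pi_dist (Function.update x 0 t) (0 : Fin (m+1) → ℝ) 0) hmem
    simp only [Function.update_self, Real.dist_eq, sub_zero] at this
    exact abs_le.mp this
  have hTcomp : IsCompact T := Metric.isCompact_of_isClosed_isBounded hTclosed hTbdd
  set t₀ := sSup T with ht₀
  have ht₀T : t₀ ∈ T := hTcomp.sSup_mem hTne
  set z := Function.update x 0 t₀ with hz
  have hzR : z ∈ R := ht₀T
  have hzfr : z ∈ frontier R := by
    rw [frontier, hclosed.closure_eq]
    refine ⟨hzR, fun hzint => ?_⟩
    obtain ⟨δ, hδ, hball'⟩ := Metric.isOpen_iff.mp isOpen_interior z hzint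
    have hmem : t₀ + δ/2 ∈ T := by
      show Function.update x 0 (t₀ + δ/2) ∈ R
      refine interior_subset (hball' ?_)
      rw [Metric.mem_ball, dist_pi_lt_iff hδ]
      intro j
      rcases eq_or_ne j 0 with rfl | hj
      · simp only [hz, Function.update_self, Real.dist_eq, add_sub_cancel_left]
        rw [abs_of_pos (by linarith)]; linarith
      · simpa [hz, Function.update_of_ne hj] using hδ
    have := le_csSup hTbdd.bddAbove hmem
    linarith
  exact ⟨z, ⟨hzfr, hzR⟩, fun y hy => by rw [hz, hconst]; exact hmax' y hy⟩

theorem multilinear_extrema_on_frontier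
    (n : ℕ) (hn : 1 ≤ n)
    (P : MvPolynomial (Fin n) ℝ) (hP : ∀ i : Fin n, P.degreeOf i ≤ 1)
    (f : (Fin n → ℝ) → ℝ) (hf : ∀ x, f x = MvPolynomial.eval x P)
    (R : Set (Fin n → ℝ)) (hne : R.Nonempty) (hclosed : IsClosed R)
    (hbdd : Bornology.IsBounded R) :
    (∃ x ∈ frontier R ∩ R, ∀ y ∈ R, f y ≤ f x) ∧
    (∃ x ∈ frontier R ∩ R, ∀ y ∈ R, f x ≤ f y) := by
  obtain ⟨m, rfl⟩ : ∃ m, n = m + 1 := ⟨n - 1, (Nat.succ_pred_eq_of_pos hn).symm⟩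
  constructor
  · obtain ⟨x, hx, hmax⟩ := key_max m P (hP 0) R hne hclosed hbdd
    exact ⟨x, hx, fun y hy => by rw [hf, hf]; exact hmax y hy⟩
  · obtain ⟨x, hx, hmax⟩ := key_max m (-P) (by rw [MvPolynomial.degreeOf_neg]; exact hP 0)
      R hne hclosed hbdd
    refine ⟨x, hx, fun y hy => ?_⟩
    have := hmax y hy
    simp only [map_neg, neg_le_neg_iff] at this
    rw [hf, hf]
    exact this
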